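/- Let E : 𝓗 → ℝ be C², R : 𝓗 → 𝓗 a retraction satisfying the retraction assumption, 0 < β ≤ β₀ with β₀ as in the global energy-decrease result, and P⁰ ∈ 𝓜_N. Let (P^k) be the gradient-descent iterates P^{k+1} = R(P^k − βΠ_{P^k}(∇E(P^k))) and let E_c = lim_k E(P^k). Then there exists a connected component A_c of the critical set C(E_c) = {P ∈ 𝓜_N : E(P) = E_c and Π_P(∇E(P)) = 0} such that dist(P^k, A_c) → 0 as k → ∞. -/

import Mathlib

open Matrix Filter Topology Metric
open scoped BigOperators

attribute [local instance] Matrix.normedAddCommGroup Matrix.normedSpace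

noncomputable section

/-- Square real matrices of size `n`. -/
abbrev Mat (n : ℕ) := Matrix (Fin n) (Fin n) ℝ

/-- Frobenius inner product `⟨A, B⟩ = Tr(AᵀB)`. -/
def frobInner {n : ℕ} (A B : Mat n) : ℝ := (Aᵀ * B).trace

/-- Frobenius norm. -/
def frobNorm {n : ℕ} (A : Mat n) : ℝ := Real.sqrt ((Aᵀ * A).trace)

/-- The manifold `𝓜_N` of rank-`N` symmetric orthogonal projectors. -/
def projSet (n N : ℕ) : Set (Mat n) := {P | P.IsSymm ∧ P * P = P ∧ P.trace = (N : ℝ)}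

/-- The tangent space `T_P 𝓜_N`. -/
def tangentSet {n : ℕ} (P : Mat n) : Set (Mat n) :=
  {X | X.IsSymm ∧ P * X + X * P = X ∧ X.trace = 0}

/-- The projection `Π_P(X) = P X (1 − P) + (1 − P) X P` onto the tangent space. -/
def piT {n : ℕ} (P X : Mat n) : Mat n := P * X * (1 - P) + (1 - P) * X * P

/-- The operator `Ω_* X = −[P, [H, X]]`. -/
def OmegaOp {n : ℕ} (P H X : Mat n) : Mat n :=
  -(P * (H * X - X * H) - (H * X - X * H) * P)

namespace AuxGD

variable {n : ℕ}

lemma trace_eq_sum_sq (X : Mat n) : (Xᵀ * X).trace = ∑ i, ∑ j, (X j i) ^ 2 := by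
  simp [Matrix.trace, Matrix.diag, Matrix.mul_apply, sq]

lemma frobNorm_nonneg (X : Mat n) : 0 ≤ frobNorm X := Real.sqrt_nonneg _

lemma norm_le_frobNorm (X : Mat n) : ‖X‖ ≤ frobNorm X := by
  rw [Matrix.norm_le_iff (frobNorm_nonneg X)]
  intro i j
  rw [Real.norm_eq_abs, ← Real.sqrt_sq_eq_abs, frobNorm, trace_eq_sum_sq]
  apply Real.sqrt_le_sqrt
  calc X i j ^ 2 ≤ ∑ i', (X i' j)^2 :=
        Finset.single_le_sum (f := fun i' => (X i' j)^2) (fun k _ => sq_nonneg _)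
          (Finset.mem_univ i)
    _ ≤ ∑ j', ∑ i', (X i' j')^2 :=
        Finset.single_le_sum (f := fun j' => ∑ i', (X i' j')^2)
          (fun k _ => Finset.sum_nonneg fun _ _ => sq_nonneg _) (Finset.mem_univ j)

lemma frobNorm_le (X : Mat n) : frobNorm X ≤ n * ‖X‖ := by
  have h : (Xᵀ * X).trace ≤ (n * ‖X‖) ^ 2 := by
    rw [trace_eq_sum_sq]
    calc ∑ i, ∑ j, (X j i) ^ 2 ≤ ∑ _i : Fin n, ∑ _j : Fin n, ‖X‖ ^ 2 := by
          refine Finset.sum_le_sum fun i _ => Finset.sum_le_sum fun j _ => ?_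
          have h0 : |X j i| ≤ ‖X‖ := Matrix.norm_entry_le_entrywise_sup_norm X
          nlinarith [abs_nonneg (X j i), le_abs_self (X j i), neg_abs_le (X j i)]
      _ = n * n * ‖X‖ ^ 2 := by simp [Finset.sum_const]; ring
      _ = (n * ‖X‖) ^ 2 := by ring
  calc frobNorm X ≤ Real.sqrt ((n * ‖X‖)^2) := Real.sqrt_le_sqrt h
    _ = n * ‖X‖ := Real.sqrt_sq (by positivity)

lemma isClosed_projSet (N : ℕ) : IsClosed (projSet n N) := by
  have h1 : IsClosed {P : Mat n | P.IsSymm} :=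
    isClosed_eq (continuous_id.matrix_transpose) continuous_id
  have h2 : IsClosed {P : Mat n | P * P = P} :=
    isClosed_eq (continuous_id.matrix_mul continuous_id) continuous_id
  have h3 : IsClosed {P : Mat n | P.trace = (N : ℝ)} :=
    isClosed_eq (continuous_id.matrix_trace) continuous_const
  have : projSet n N
      = ({P : Mat n | P.IsSymm} ∩ {P : Mat n | P * P = P}) ∩ {P : Mat n | P.trace = (N : ℝ)} := by
    ext P; simp [projSet, Set.mem_inter_iff, and_assoc]
  rw [this]; exact (h1.inter h2).inter h3

lemma isCompact_projSet (N : ℕ) : IsCompact (projSet n N) := by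
  haveI : ProperSpace (Mat n) := FiniteDimensional.proper_real _
  refine (isCompact_closedBall (0 : Mat n) (Real.sqrt N)).of_isClosed_subset
    (isClosed_projSet N) ?_
  intro P hP
  obtain ⟨hs, hp, ht⟩ := hP
  have hfro : frobNorm P = Real.sqrt N := by
    rw [frobNorm]
    have h : Pᵀ * P = P := by rw [hs]; exact hp
    rw [h, ht]
  simp only [Metric.mem_closedBall, dist_zero_right]
  rw [← hfro]; exact norm_le_frobNorm P

lemma piT_isSymm {P X : Mat n} (hP : P.IsSymm) (hX : X.IsSymm) : (piT P X).IsSymm := by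
  unfold Matrix.IsSymm at *
  simp [piT, Matrix.transpose_add, Matrix.transpose_mul, Matrix.transpose_sub,
    Matrix.transpose_one, hP, hX, Matrix.mul_assoc, add_comm]

lemma trace_cyc (G A S B : Mat n) : (G * (A * S * B)).trace = ((B * G * A) * S).trace := by
  calc (G * (A * S * B)).trace = ((G * A) * (S * B)).trace := by rw [mul_assoc, mul_assoc]
    _ = ((S * B) * (G * A)).trace := Matrix.trace_mul_comm _ _
    _ = (S * (B * (G * A))).trace := by rw [mul_assoc]
    _ = ((B * (G * A)) * S).trace := Matrix.trace_mul_comm _ _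
    _ = ((B * G * A) * S).trace := by rw [Matrix.mul_assoc B G A]

lemma trace_piT_swap (G P S : Mat n) : (G * piT P S).trace = (piT P G * S).trace := by
  simp only [piT, mul_add, add_mul, Matrix.trace_add]
  rw [trace_cyc G P S (1 - P), trace_cyc G (1 - P) S P, add_comm]

lemma trace_mul_stdBasis (A : Mat n) (i j : Fin n) :
    (A * Matrix.single i j 1).trace = A j i := by
  rw [Matrix.trace]
  rw [Finset.sum_eq_single j]
  · simp [Matrix.diag]
  · intro b _ hb
    simp [Matrix.diag, Matrix.mul_single_apply_of_ne (hbj := hb)]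
  · simp

/-- symmetrized basis matrix -/
def symBasis (i j : Fin n) : Mat n :=
  (1/2 : ℝ) • (Matrix.single i j 1 + Matrix.single j i 1)

lemma symBasis_isSymm (i j : Fin n) : (symBasis i j).IsSymm := by
  apply Matrix.IsSymm.ext
  intro a b
  simp only [symBasis, Matrix.smul_apply, Matrix.add_apply, Matrix.single, Matrix.of_apply,
    smul_eq_mul]
  congr 1
  rw [add_comm]
  congr 1 <;> simp [and_comm]

lemma trace_mul_symBasis (A : Mat n) (hA : A.IsSymm) (i j : Fin n) :
    (A * symBasis i j).trace = A i j := by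
  rw [symBasis, Matrix.mul_smul, Matrix.trace_smul, mul_add, Matrix.trace_add,
    trace_mul_stdBasis, trace_mul_stdBasis]
  have h : A j i = A i j := hA.apply i j
  rw [h]; simp; ring

lemma key_entry (P G : Mat n) (hP : P.IsSymm) (hG : G.IsSymm) (i j : Fin n) :
    (G * piT P (symBasis i j)).trace = piT P G i j := by
  rw [trace_piT_swap, trace_mul_symBasis _ (piT_isSymm hP hG)]

lemma continuous_piT (S : Mat n) : Continuous fun P : Mat n => piT P S := by
  unfold piT
  exact (((continuous_id.matrix_mul continuous_const).matrix_mul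
    (continuous_const.sub continuous_id)).add
    (((continuous_const.sub continuous_id).matrix_mul continuous_const).matrix_mul continuous_id))

end AuxGD

/-- the gradient-descent iterates approach a connected component of the
critical set `C(E_c) = {P ∈ 𝓜_N : E(P) = E_c, Π_P∇E(P) = 0}`, where `E_c` is the limit
of the (nonincreasing) energies. The hypotheses `hdec`, `hres`, `hstep`, `hmem` are the
conclusions guaranteed by the global energy-decrease result for `0 < β ≤ β₀`. -/
theorem gradient_descent_converges_to_component_of_critical_set {Nb N : ℕ}
    (E : Mat Nb → ℝ) (hE : ContDiff ℝ 2 E)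
    (gradE : Mat Nb → Mat Nb)
    (hgradsym : ∀ P : Mat Nb, (gradE P).IsSymm)
    (hgrad : ∀ (P X : Mat Nb), X.IsSymm → fderiv ℝ E P X = (gradE P * X).trace)
    (R : Mat Nb → Mat Nb) (hR : ContDiff ℝ 2 R)
    (c C : ℝ) (hc : 0 < c) (hC : 0 < C)
    (hret : ∀ P ∈ projSet Nb N, ∀ X : Mat Nb, frobNorm X ≤ c →
      R (P + X) ∈ projSet Nb N ∧ frobNorm (R (P + X) - P - piT P X) ≤ C * frobNorm X ^ 2)
    (β : ℝ) (hβ : 0 < β)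
    (P0 : Mat Nb) (hP0 : P0 ∈ projSet Nb N)
    (Pseq : ℕ → Mat Nb) (hinit : Pseq 0 = P0)
    (hrec : ∀ k : ℕ, Pseq (k + 1) = R (Pseq k - β • piT (Pseq k) (gradE (Pseq k))))
    (hmem : ∀ k : ℕ, Pseq k ∈ projSet Nb N)
    (hdec : ∀ k : ℕ, E (Pseq (k + 1)) ≤
      E (Pseq k) - β / 2 * frobNorm (piT (Pseq k) (gradE (Pseq k))) ^ 2)
    (hres : Tendsto (fun k : ℕ => piT (Pseq k) (gradE (Pseq k))) atTop (nhds 0))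
    (hstep : Tendsto (fun k : ℕ => frobNorm (Pseq (k + 1) - Pseq k)) atTop (nhds 0))
    (Ec : ℝ) (hEc : Tendsto (fun k : ℕ => E (Pseq k)) atTop (nhds Ec)) :
    ∃ Q0 ∈ {P : Mat Nb | P ∈ projSet Nb N ∧ E P = Ec ∧ piT P (gradE P) = 0},
      Tendsto
        (fun k : ℕ => sInf ((fun Q => frobNorm (Pseq k - Q)) ''
          connectedComponentIn
            {P : Mat Nb | P ∈ projSet Nb N ∧ E P = Ec ∧ piT P (gradE P) = 0} Q0))
        atTop (nhds 0) := by
  classical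
  haveI : ProperSpace (Mat Nb) := FiniteDimensional.proper_real _
  set crit : Set (Mat Nb) :=
    {P : Mat Nb | P ∈ projSet Nb N ∧ E P = Ec ∧ piT P (gradE P) = 0} with hcritdef
  set L : Set (Mat Nb) := ⋂ m : ℕ, closure (Pseq '' Set.Ici m) with hLdef
  have hclosedP : IsClosed (projSet Nb N) := AuxGD.isClosed_projSet N
  have hcompactP : IsCompact (projSet Nb N) := AuxGD.isCompact_projSet N
  have htailsub : ∀ m : ℕ, closure (Pseq '' Set.Ici m) ⊆ projSet Nb N := by
    intro m
    apply closure_minimal _ hclosedP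
    rintro x ⟨k, -, rfl⟩
    exact hmem k
  have hLclosed : IsClosed L := isClosed_iInter fun _ => isClosed_closure
  have hLsub : L ⊆ projSet Nb N := (Set.iInter_subset _ 0).trans (htailsub 0)
  have hLcompact : IsCompact L := hcompactP.of_isClosed_subset hLclosed hLsub
  have hLne : L.Nonempty := by
    apply IsCompact.nonempty_iInter_of_directed_nonempty_isCompact_isClosed
    · intro m m'
      refine ⟨max m m', ?_, ?_⟩ <;>
        exact closure_mono (Set.image_mono (Set.Ici_subset_Ici.2 (by omega)))
    · exact fun m => ⟨Pseq m, subset_closure ⟨m, le_refl m, rfl⟩⟩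
    · exact fun m => hcompactP.of_isClosed_subset isClosed_closure (htailsub m)
    · exact fun m => isClosed_closure
  -- points of L are approached by subsequences
  have hnear : ∀ Q ∈ L, ∀ ε > (0:ℝ), ∀ m : ℕ, ∃ k ≥ m, dist (Pseq k) Q < ε := by
    intro Q hQ ε hε m
    have hQm : Q ∈ closure (Pseq '' Set.Ici m) := by
      rw [hLdef] at hQ; exact Set.mem_iInter.1 hQ m
    obtain ⟨y, ⟨k, hk, rfl⟩, hy⟩ := Metric.mem_closure_iff.1 hQm ε hε
    exact ⟨k, hk, by rwa [dist_comm]⟩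
  have hsubseq : ∀ Q ∈ L, ∃ φ : ℕ → ℕ, (∀ k, k ≤ φ k) ∧
      Tendsto (fun k => Pseq (φ k)) atTop (𝓝 Q) := by
    intro Q hQ
    have h : ∀ m : ℕ, ∃ k, k ≥ m ∧ dist (Pseq k) Q < 1 / (m + 1) := by
      intro m
      obtain ⟨k, hk, hd⟩ := hnear Q hQ (1 / (m + 1)) (by positivity) m
      exact ⟨k, hk, hd⟩
    choose φ hφge hφd using h
    refine ⟨φ, hφge, ?_⟩
    refine tendsto_iff_dist_tendsto_zero.2 ?_
    apply squeeze_zero (fun _ => dist_nonneg) (fun m => (hφd m).le)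
    exact tendsto_one_div_add_atTop_nhds_zero_nat
  -- every point of L is critical
  have hQcrit : ∀ Q ∈ L, Q ∈ crit := by
    intro Q hQ
    obtain ⟨φ, hφge, hφt⟩ := hsubseq Q hQ
    have hφatTop : Tendsto φ atTop atTop := tendsto_atTop_mono hφge tendsto_id
    have hQproj : Q ∈ projSet Nb N := hLsub hQ
    refine ⟨hQproj, ?_, ?_⟩
    · exact tendsto_nhds_unique ((hE.continuous.tendsto Q).comp hφt) (hEc.comp hφatTop)
    · ext i j
      set S : Mat Nb := AuxGD.symBasis i j with hSdef
      have hSsym : S.IsSymm := AuxGD.symBasis_isSymm i j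
      have hid : ∀ k : ℕ, piT (Pseq k) (gradE (Pseq k)) i j
          = fderiv ℝ E (Pseq k) (piT (Pseq k) S) := by
        intro k
        rw [hgrad _ _ (AuxGD.piT_isSymm (hmem k).1 hSsym),
          AuxGD.key_entry _ _ (hmem k).1 (hgradsym (Pseq k))]
      have hcont : Continuous fun P : Mat Nb => fderiv ℝ E P (piT P S) :=
        (hE.continuous_fderiv (by norm_num)).clm_apply (AuxGD.continuous_piT S)
      have hlim1 : Tendsto (fun k => piT (Pseq (φ k)) (gradE (Pseq (φ k))) i j)
          atTop (𝓝 0) := by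
        have he : Continuous fun A : Mat Nb => A i j :=
          (continuous_apply j).comp (continuous_apply i)
        have := (he.tendsto (0 : Mat Nb)).comp (hres.comp hφatTop)
        exact this
      have hlim2 : Tendsto (fun k => piT (Pseq (φ k)) (gradE (Pseq (φ k))) i j)
          atTop (𝓝 (fderiv ℝ E Q (piT Q S))) := by
        simp only [hid]
        exact (hcont.tendsto Q).comp hφt
      have h0 : fderiv ℝ E Q (piT Q S) = 0 := tendsto_nhds_unique hlim2 hlim1
      have : piT Q (gradE Q) i j = fderiv ℝ E Q (piT Q S) := by
        rw [hgrad _ _ (AuxGD.piT_isSymm hQproj.1 hSsym),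
          AuxGD.key_entry _ _ hQproj.1 (hgradsym Q)]
      rw [this, h0]
      rfl
  -- distance from iterates to L tends to 0
  have hdistL : Tendsto (fun k => infDist (Pseq k) L) atTop (𝓝 0) := by
    by_contra hcon
    rw [Metric.tendsto_atTop] at hcon
    push_neg at hcon
    obtain ⟨ε, hε, hfreq⟩ := hcon
    have hfreq' : ∀ m : ℕ, ∃ k ≥ m, ε ≤ infDist (Pseq k) L := by
      intro m
      obtain ⟨k, hk, hge⟩ := hfreq m
      refine ⟨k, hk, ?_⟩
      rw [Real.dist_eq, sub_zero, abs_of_nonneg Metric.infDist_nonneg] at hge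
      exact hge
    obtain ⟨φ, hφmono, hφprop⟩ :=
      Filter.extraction_of_frequently_atTop (Filter.frequently_atTop.2 hfreq')
    haveI : FirstCountableTopology (Mat Nb) :=
      @UniformSpace.firstCountableTopology _ PseudoMetricSpace.toUniformSpace
        EMetric.instIsCountablyGeneratedUniformity
    obtain ⟨Q, hQmem, ψ, hψmono, htend⟩ := hcompactP.tendsto_subseq (fun k => hmem (φ k))
    have hQL : Q ∈ L := by
      rw [hLdef]
      refine Set.mem_iInter.2 fun m => ?_
      refine mem_closure_of_tendsto htend ?_
      filter_upwards [Filter.eventually_ge_atTop m] with k hk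
      exact ⟨φ (ψ k), le_trans (le_trans hk (hψmono.le_apply)) (hφmono.le_apply), rfl⟩
    have hd0 : Tendsto (fun k => dist (Pseq (φ (ψ k))) Q) atTop (𝓝 0) :=
      tendsto_iff_dist_tendsto_zero.1 htend
    have hev := (hd0.eventually_lt_const hε).exists
    obtain ⟨k, hk⟩ := hev
    exact absurd (lt_of_le_of_lt (le_trans (hφprop (ψ k))
      (Metric.infDist_le_dist_of_mem hQL)) hk) (lt_irrefl ε)
  -- consecutive steps tend to 0 in distance
  have hstep' : Tendsto (fun k => dist (Pseq (k+1)) (Pseq k)) atTop (𝓝 0) :=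
    squeeze_zero (fun _ => dist_nonneg)
      (fun k => by rw [dist_eq_norm]; exact AuxGD.norm_le_frobNorm _) hstep
  -- L is preconnected
  have hLconn : IsPreconnected L := by
    rw [isPreconnected_closed_iff]
    intro t t' ht ht' hcover hne1 hne2
    by_contra hempty
    rw [Set.not_nonempty_iff_eq_empty] at hempty
    have hABdisj : (L ∩ t) ∩ (L ∩ t') = ∅ := by
      rw [← hempty]
      ext x; constructor
      · rintro ⟨⟨hx1, hx2⟩, ⟨-, hx3⟩⟩; exact ⟨hx1, hx2, hx3⟩
      · rintro ⟨hx1, hx2, hx3⟩; exact ⟨⟨hx1, hx2⟩, hx1, hx3⟩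
    have hAcomp : IsCompact (L ∩ t) := hLcompact.inter_right ht
    have hBcomp : IsCompact (L ∩ t') := hLcompact.inter_right ht'
    obtain ⟨a0, ha0, hmin⟩ := hAcomp.exists_isMinOn hne1
      (Metric.continuous_infDist_pt (L ∩ t')).continuousOn
    have ha0nB : a0 ∉ L ∩ t' := by
      intro h
      have : a0 ∈ (L ∩ t) ∩ (L ∩ t') := ⟨ha0, h⟩
      rw [hABdisj] at this
      exact this
    have hδpos : 0 < infDist a0 (L ∩ t') :=
      (hBcomp.isClosed.notMem_iff_infDist_pos hne2).1 ha0nB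
    set δ := infDist a0 (L ∩ t') with hδdef
    have hδle : ∀ a ∈ L ∩ t, ∀ b ∈ L ∩ t', δ ≤ dist a b := fun a ha b hb =>
      le_trans (hmin ha) (Metric.infDist_le_dist_of_mem hb)
    set ε := δ / 3 with hεdef
    have hε : 0 < ε := by positivity
    have hev : ∀ᶠ k in atTop,
        dist (Pseq (k+1)) (Pseq k) < ε ∧ infDist (Pseq k) L < ε :=
      (hstep'.eventually_lt_const hε).and (hdistL.eventually_lt_const hε)
    obtain ⟨k0, hk0⟩ := Filter.eventually_atTop.1 hev
    -- pick an index ≥ k0 near A = L ∩ t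
    obtain ⟨a1, ha1⟩ := id hne1
    obtain ⟨ka, hka, hkad⟩ := hnear a1 ha1.1 ε hε k0
    have hstart : infDist (Pseq ka) (L ∩ t) < ε :=
      lt_of_le_of_lt (Metric.infDist_le_dist_of_mem ha1) hkad
    -- once near A and past k0, stay near A
    have hstay : ∀ m, ka ≤ m → infDist (Pseq m) (L ∩ t) < ε := by
      intro m hm
      induction m with
      | zero =>
          have : ka = 0 := Nat.le_zero.mp hm
          rw [← this]; exact hstart
      | succ m ih =>
          rcases Nat.lt_or_ge ka (m+1) with hlt | hge
          · have hm' : ka ≤ m := Nat.lt_succ_iff.mp hlt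
            have ihm := ih hm'
            have hmk0 : k0 ≤ m + 1 := le_trans hka (le_trans hm' (Nat.le_succ m))
            obtain ⟨q, hqL, hqd⟩ :=
              (Metric.infDist_lt_iff hLne).1 (hk0 (m+1) hmk0).2
            rcases hcover hqL with hqt | hqt'
            · exact lt_of_le_of_lt (Metric.infDist_le_dist_of_mem ⟨hqL, hqt⟩) hqd
            · exfalso
              obtain ⟨a, haA, had⟩ := (Metric.infDist_lt_iff hne1).1 ihm
              have hstep_m : dist (Pseq (m+1)) (Pseq m) < ε :=
                (hk0 m (le_trans hka hm')).1
              have : dist a q < δ := by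
                calc dist a q ≤ dist a (Pseq m) + dist (Pseq m) (Pseq (m+1))
                      + dist (Pseq (m+1)) q := dist_triangle4 a (Pseq m) (Pseq (m+1)) q
                  _ < ε + ε + ε := by
                      rw [dist_comm a (Pseq m), dist_comm (Pseq m) (Pseq (m+1))]
                      exact add_lt_add (add_lt_add had hstep_m) hqd
                  _ = δ := by rw [hεdef]; ring
              exact absurd this (not_lt.2 (hδle a haA q ⟨hqL, hqt'⟩))
          · have : m + 1 = ka := le_antisymm hge hm
            rw [this]; exact hstart
    -- but the sequence is also frequently near B = L ∩ t'
    obtain ⟨b1, hb1⟩ := id hne2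
    obtain ⟨kb, hkb, hkbd⟩ := hnear b1 hb1.1 ε hε ka
    obtain ⟨a, haA, had⟩ := (Metric.infDist_lt_iff hne1).1 (hstay kb hkb)
    have : dist a b1 < δ := by
      calc dist a b1 ≤ dist a (Pseq kb) + dist (Pseq kb) b1 := dist_triangle _ _ _
        _ < ε + ε := by rw [dist_comm a (Pseq kb)]; exact add_lt_add had hkbd
        _ < δ := by rw [hεdef]; linarith
    exact absurd this (not_lt.2 (hδle a haA b1 hb1))
  -- conclude
  obtain ⟨Q0, hQ0L⟩ := id hLne
  have hQ0crit : Q0 ∈ crit := hQcrit Q0 hQ0L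
  have hLsubcomp : L ⊆ connectedComponentIn crit Q0 :=
    hLconn.subset_connectedComponentIn hQ0L (fun x hx => hQcrit x hx)
  refine ⟨Q0, hQ0crit, ?_⟩
  have hupper : ∀ k : ℕ, sInf ((fun Q => frobNorm (Pseq k - Q)) ''
      connectedComponentIn crit Q0) ≤ Nb * infDist (Pseq k) L := by
    intro k
    apply le_of_forall_pos_le_add
    intro η hη
    have hlt : infDist (Pseq k) L < infDist (Pseq k) L + η / (Nb + 1) :=
      lt_add_of_pos_right _ (by positivity)
    obtain ⟨q, hqL, hqd⟩ := (Metric.infDist_lt_iff hLne).1 hlt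
    have hmemim : frobNorm (Pseq k - q) ∈ (fun Q => frobNorm (Pseq k - Q)) ''
        connectedComponentIn crit Q0 := ⟨q, hLsubcomp hqL, rfl⟩
    have hbdd : BddBelow ((fun Q => frobNorm (Pseq k - Q)) ''
        connectedComponentIn crit Q0) := by
      refine ⟨0, ?_⟩
      rintro x ⟨y, -, rfl⟩
      exact AuxGD.frobNorm_nonneg _
    calc sInf ((fun Q => frobNorm (Pseq k - Q)) '' connectedComponentIn crit Q0)
        ≤ frobNorm (Pseq k - q) := csInf_le hbdd hmemim
      _ ≤ Nb * ‖Pseq k - q‖ := AuxGD.frobNorm_le _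
      _ = Nb * dist (Pseq k) q := by rw [dist_eq_norm]
      _ ≤ Nb * (infDist (Pseq k) L + η / (Nb + 1)) := by
          apply mul_le_mul_of_nonneg_left hqd.le (by positivity)
      _ = Nb * infDist (Pseq k) L + Nb * (η / (Nb + 1)) := by ring
      _ ≤ Nb * infDist (Pseq k) L + η := by
          have h1 : (Nb : ℝ) * (η / (Nb + 1)) ≤ η := by
            rw [mul_div_assoc']
            rw [div_le_iff₀ (by positivity)]
            nlinarith [hη.le]
          linarith
  have hlower : ∀ k : ℕ, 0 ≤ sInf ((fun Q => frobNorm (Pseq k - Q)) ''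
      connectedComponentIn crit Q0) := by
    intro k
    apply Real.sInf_nonneg
    rintro x ⟨y, -, rfl⟩
    exact AuxGD.frobNorm_nonneg _
  have hg : Tendsto (fun k => (Nb : ℝ) * infDist (Pseq k) L) atTop (𝓝 0) := by
    have := hdistL.const_mul (Nb : ℝ)
    simpa using this
  exact squeeze_zero hlower hupper hg
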